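/- Assume M = U Λ U⁻¹ is diagonalizable with U ∈ ℝ^{n×n} invertible and Λ real diagonal. Then the aNGMRES(m, m+1) iterates from any u₀ satisfy ‖r_{j(m+1)}‖ ≤ (χ(m+1) · κ₂(U))^j · ‖r₀‖ for all j ≥ 1. -/

import Mathlib

open Matrix Polynomial Set

noncomputable section

/-- Matrix–vector product, landing in Euclidean space. -/
def mulVecE {n : ℕ} (M : Matrix (Fin n) (Fin n) ℝ) (v : EuclideanSpace ℝ (Fin n)) :
    EuclideanSpace ℝ (Fin n) :=
  WithLp.toLp 2 (M.mulVec v)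

/-- Residual `r(u) = A u - b`. -/
def res {n : ℕ} (A : Matrix (Fin n) (Fin n) ℝ) (b u : EuclideanSpace ℝ (Fin n)) :
    EuclideanSpace ℝ (Fin n) :=
  mulVecE A u - b

/-- Richardson fixed-point map `q(u) = (I - A) u + b = M u + b` with `M = I - A`. -/
def fp {n : ℕ} (A : Matrix (Fin n) (Fin n) ℝ) (b u : EuclideanSpace ℝ (Fin n)) :
    EuclideanSpace ℝ (Fin n) :=
  mulVecE (1 - A) u + b

/-- The NGMRES(m) least-squares objective at step `k`:
`β ↦ ‖r(q(u_k)) + Σ_{i=0}^m β_i (r(q(u_k)) - r(u_{k-i}))‖`. -/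
def ngObj {n : ℕ} (A : Matrix (Fin n) (Fin n) ℝ) (b : EuclideanSpace ℝ (Fin n))
    (m : ℕ) (prev : ℕ → EuclideanSpace ℝ (Fin n)) (k : ℕ) (β : Fin (m+1) → ℝ) : ℝ :=
  ‖res A b (fp A b (prev k)) +
    ∑ i : Fin (m+1), β i • (res A b (fp A b (prev k)) - res A b (prev (k - (i : ℕ))))‖

/-- `next` is produced from `prev (k-m), …, prev k` by a single NGMRES(m) step:
`next = q(u_k) + Σ_{i=0}^m β_i (q(u_k) - u_{k-i})` where `β` minimizes the
least-squares objective `ngObj`. -/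
def NGMRESStep {n : ℕ} (A : Matrix (Fin n) (Fin n) ℝ) (b : EuclideanSpace ℝ (Fin n))
    (m : ℕ) (prev : ℕ → EuclideanSpace ℝ (Fin n)) (k : ℕ)
    (next : EuclideanSpace ℝ (Fin n)) : Prop :=
  ∃ β : Fin (m+1) → ℝ,
    (∀ γ : Fin (m+1) → ℝ, ngObj A b m prev k β ≤ ngObj A b m prev k γ) ∧
    next = fp A b (prev k) +
      ∑ i : Fin (m+1), β i • (fp A b (prev k) - prev (k - (i : ℕ)))

/-- The spectral (ℓ²-operator) norm of a matrix. -/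
def opNorm {n : ℕ} (M : Matrix (Fin n) (Fin n) ℝ) : ℝ :=
  ‖(Matrix.toEuclideanCLM (𝕜 := ℝ) M : EuclideanSpace ℝ (Fin n) →L[ℝ] EuclideanSpace ℝ (Fin n))‖

/-- The 2-norm condition number `κ₂(U) = ‖U‖ ‖U⁻¹‖`. -/
def condNum {n : ℕ} (U : Matrix (Fin n) (Fin n) ℝ) : ℝ :=
  opNorm U * opNorm U⁻¹

/-- `ε(a,b,s)`: minimum over real polynomials `p` of degree at most `s` with `p(1) = 1`
of `max_{t ∈ [1/b, 1/a]} |p(t)|`. -/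
def eps (a b : ℝ) (s : ℕ) : ℝ :=
  sInf {t : ℝ | ∃ p : Polynomial ℝ, p.natDegree ≤ s ∧ p.eval 1 = 1 ∧
    t = sSup ((fun x => |p.eval x|) '' Set.Icc (1/b) (1/a))}

/-- `χ(s)`: minimum over real polynomials `p` of degree at most `s` with `p(1) = 1`
of `max_{λ ∈ Σ(M)} |p(λ)|`, where `Σ(M)` is the set of eigenvalues of `M`. -/
def chiSp {n : ℕ} (M : Matrix (Fin n) (Fin n) ℝ) (s : ℕ) : ℝ :=
  sInf {t : ℝ | ∃ p : Polynomial ℝ, p.natDegree ≤ s ∧ p.eval 1 = 1 ∧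
    t = sSup ((fun x => |p.eval x|) '' spectrum ℝ M)}

/-- The Krylov subspace `K_k(A, r) = span{r, Ar, …, A^{k-1} r}`. -/
def Krylov {n : ℕ} (A : Matrix (Fin n) (Fin n) ℝ) (r : EuclideanSpace ℝ (Fin n)) (k : ℕ) :
    Submodule ℝ (EuclideanSpace ℝ (Fin n)) :=
  Submodule.span ℝ (Set.range fun i : Fin k => mulVecE (A ^ (i : ℕ)) r)

/-- The matrix `S_k = [u_{k-m+1}-u_{k-m}, …, u_k-u_{k-1}, q(u_k)-u_k] ∈ ℝ^{n×(m+1)}`. -/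
def Smat {n : ℕ} (A : Matrix (Fin n) (Fin n) ℝ) (b : EuclideanSpace ℝ (Fin n))
    (prev : ℕ → EuclideanSpace ℝ (Fin n)) (k m : ℕ) :
    Matrix (Fin n) (Fin (m+1)) ℝ :=
  Matrix.of fun r c =>
    if (c : ℕ) < m then prev (k - m + c + 1) r - prev (k - m + c) r
    else fp A b (prev k) r - prev k r

/-- `u` is the sequence of aNGMRES(m, p) iterates (with `m = ⊤` giving aNGMRES(∞, p)):
if `p ∤ k` then `u_k = q(u_{k-1})`, and if `p ∣ k` then `u_k` is produced by one
NGMRES(min(m, k-1)) step from `u_{k-1-m_k}, …, u_{k-1}`. -/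
def aNGMRES {n : ℕ} (A : Matrix (Fin n) (Fin n) ℝ) (b : EuclideanSpace ℝ (Fin n))
    (m : ℕ∞) (p : ℕ) (u : ℕ → EuclideanSpace ℝ (Fin n)) : Prop :=
  ∀ k, 1 ≤ k →
    (¬ p ∣ k → u k = fp A b (u (k-1))) ∧
    (p ∣ k → NGMRESStep A b (min m ((k : ℕ∞) - 1)).toNat u (k-1) (u k))


section Helpers

variable {n : ℕ}

lemma clm_apply (M : Matrix (Fin n) (Fin n) ℝ) (v : EuclideanSpace ℝ (Fin n)) :
    (Matrix.toEuclideanCLM (𝕜 := ℝ) M) v = mulVecE M v := rfl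

lemma norm_mulVecE_le (M : Matrix (Fin n) (Fin n) ℝ) (v : EuclideanSpace ℝ (Fin n)) :
    ‖mulVecE M v‖ ≤ opNorm M * ‖v‖ := by
  rw [← clm_apply]; exact (Matrix.toEuclideanCLM (𝕜 := ℝ) M).le_opNorm v

lemma mulVecE_add (A : Matrix (Fin n) (Fin n) ℝ) (x y : EuclideanSpace ℝ (Fin n)) :
    mulVecE A (x + y) = mulVecE A x + mulVecE A y := by
  rw [← clm_apply, ← clm_apply, ← clm_apply, map_add]

lemma mulVecE_sub (A : Matrix (Fin n) (Fin n) ℝ) (x y : EuclideanSpace ℝ (Fin n)) :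
    mulVecE A (x - y) = mulVecE A x - mulVecE A y := by
  rw [← clm_apply, ← clm_apply, ← clm_apply, map_sub]

lemma mulVecE_smul (A : Matrix (Fin n) (Fin n) ℝ) (c : ℝ) (v : EuclideanSpace ℝ (Fin n)) :
    mulVecE A (c • v) = c • mulVecE A v := by
  rw [← clm_apply, ← clm_apply, _root_.map_smul]

lemma mulVecE_sum {ι : Type*} (s : Finset ι) (f : ι → EuclideanSpace ℝ (Fin n))
    (A : Matrix (Fin n) (Fin n) ℝ) :
    mulVecE A (∑ i ∈ s, f i) = ∑ i ∈ s, mulVecE A (f i) := by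
  simp_rw [← clm_apply]; exact map_sum _ _ _

lemma mulVecE_mulVecE (A B : Matrix (Fin n) (Fin n) ℝ) (v : EuclideanSpace ℝ (Fin n)) :
    mulVecE (A * B) v = mulVecE A (mulVecE B v) := by
  simp_rw [← clm_apply, _root_.map_mul]; rfl

lemma mulVecE_one (v : EuclideanSpace ℝ (Fin n)) : mulVecE 1 v = v := by
  rw [← clm_apply, _root_.map_one]; rfl

lemma sub_mulVecE (A B : Matrix (Fin n) (Fin n) ℝ) (v : EuclideanSpace ℝ (Fin n)) :
    mulVecE (A - B) v = mulVecE A v - mulVecE B v := by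
  simp_rw [← clm_apply, map_sub]; rfl

lemma smul_mulVecE (c : ℝ) (A : Matrix (Fin n) (Fin n) ℝ) (v : EuclideanSpace ℝ (Fin n)) :
    mulVecE (c • A) v = c • mulVecE A v := by
  simp_rw [← clm_apply, _root_.map_smul]; rfl

lemma sum_mulVecE {ι : Type*} (s : Finset ι) (f : ι → Matrix (Fin n) (Fin n) ℝ)
    (v : EuclideanSpace ℝ (Fin n)) :
    mulVecE (∑ i ∈ s, f i) v = ∑ i ∈ s, mulVecE (f i) v := by
  simp_rw [← clm_apply, map_sum]
  rw [ContinuousLinearMap.sum_apply]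

lemma res_fp (A : Matrix (Fin n) (Fin n) ℝ) (b u : EuclideanSpace ℝ (Fin n)) :
    res A b (fp A b u) = mulVecE (1 - A) (res A b u) := by
  unfold res fp
  rw [mulVecE_add, mulVecE_sub, ← mulVecE_mulVecE, ← mulVecE_mulVecE,
    mul_one_sub, one_sub_mul, sub_mulVecE, sub_mulVecE, mulVecE_one]
  abel

lemma res_add (A : Matrix (Fin n) (Fin n) ℝ) (b x w : EuclideanSpace ℝ (Fin n)) :
    res A b (x + w) = res A b x + mulVecE A w := by
  unfold res
  rw [mulVecE_add]; abel

lemma mulVecE_res_sub (A : Matrix (Fin n) (Fin n) ℝ) (b x y : EuclideanSpace ℝ (Fin n)) :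
    mulVecE A (x - y) = res A b x - res A b y := by
  unfold res
  rw [mulVecE_sub]; abel

lemma norm_diag_le (e : Fin n → ℝ) (C : ℝ) (hC : 0 ≤ C) (h : ∀ i, |e i| ≤ C)
    (v : EuclideanSpace ℝ (Fin n)) : ‖mulVecE (diagonal e) v‖ ≤ C * ‖v‖ := by
  rw [EuclideanSpace.norm_eq, EuclideanSpace.norm_eq]
  have key : ∀ i, ‖mulVecE (diagonal e) v i‖ ^ 2 ≤ C ^ 2 * ‖v i‖ ^ 2 := by
    intro i
    have h1 : mulVecE (diagonal e) v i = e i * v i := mulVec_diagonal e v i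
    rw [h1, Real.norm_eq_abs, Real.norm_eq_abs, abs_mul, mul_pow]
    exact mul_le_mul_of_nonneg_right (pow_le_pow_left₀ (abs_nonneg _) (h i) 2) (sq_nonneg _)
  calc Real.sqrt (∑ i, ‖mulVecE (diagonal e) v i‖ ^ 2)
      ≤ Real.sqrt (∑ i, C ^ 2 * ‖v i‖ ^ 2) :=
        Real.sqrt_le_sqrt (Finset.sum_le_sum fun i _ => key i)
    _ = C * Real.sqrt (∑ i, ‖v i‖ ^ 2) := by
        rw [← Finset.mul_sum, Real.sqrt_mul (sq_nonneg C), Real.sqrt_sq hC]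

lemma conjPow (U D : Matrix (Fin n) (Fin n) ℝ) (hUU : U⁻¹ * U = 1) (hUU' : U * U⁻¹ = 1)
    (t : ℕ) : (U * D * U⁻¹) ^ t = U * D ^ t * U⁻¹ := by
  induction t with
  | zero => simpa [pow_zero] using hUU'.symm
  | succ t ih =>
      rw [pow_succ, ih, pow_succ]
      simp only [mul_assoc]
      rw [← mul_assoc U⁻¹ U, hUU, one_mul]

lemma aevalConj (U : Matrix (Fin n) (Fin n) ℝ) (d : Fin n → ℝ)
    (hUU : U⁻¹ * U = 1) (hUU' : U * U⁻¹ = 1) (p : ℝ[X]) :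
    aeval (U * diagonal d * U⁻¹) p = U * diagonal (fun i => p.eval (d i)) * U⁻¹ := by
  induction p using Polynomial.induction_on' with
  | add p q hp hq =>
      rw [map_add, hp, hq]
      have h3 : (diagonal fun i => (p + q).eval (d i))
          = (diagonal fun i => p.eval (d i)) + diagonal fun i => q.eval (d i) := by
        rw [diagonal_add]; congr 1; funext i; simp [eval_add]
      rw [h3, mul_add, add_mul]
  | monomial t a =>
      rw [aeval_monomial, conjPow U _ hUU hUU' t]
      have h1 : (fun i => Polynomial.eval (d i) (Polynomial.monomial t a))
          = fun i => a * d i ^ t := by funext i; simp [eval_monomial]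
      have h2 : (diagonal fun i => a * d i ^ t) = a • ((diagonal d) ^ t) := by
        rw [diagonal_pow, ← diagonal_smul]; rfl
      rw [h1, h2, mul_smul_comm, smul_mul_assoc, ← Algebra.smul_def]

lemma Q_eq {m : ℕ} (Mp : Matrix (Fin n) (Fin n) ℝ) (p : ℝ[X])
    (hdeg : p.natDegree ≤ m + 1) (h1 : p.eval 1 = 1) :
    (1 + ∑ i : Fin (m+1), (-(p.coeff (m - (i:ℕ))))) • Mp ^ (m+1)
      - ∑ i : Fin (m+1), (-(p.coeff (m - (i:ℕ)))) • Mp ^ (m - (i:ℕ))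
    = aeval Mp p := by
  have hsum : ∑ i : Fin (m+1), p.coeff (m - (i:ℕ)) • Mp ^ (m - (i:ℕ))
      = ∑ t ∈ Finset.range (m+1), p.coeff t • Mp ^ t := by
    rw [Fin.sum_univ_eq_sum_range (fun i => p.coeff (m - i) • Mp ^ (m - i)) (m+1)]
    exact Finset.sum_range_reflect (fun t => p.coeff t • Mp ^ t) (m+1)
  have hc : ∑ t ∈ Finset.range (m+2), p.coeff t = 1 := by
    have h := Polynomial.eval_eq_sum_range' (p := p) (n := m+2) (by omega) (1 : ℝ)
    rw [h1] at h
    simpa using h.symm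
  have hγ : (1 : ℝ) + ∑ i : Fin (m+1), (-(p.coeff (m - (i:ℕ)))) = p.coeff (m+1) := by
    have e1 : ∑ i : Fin (m+1), (-(p.coeff (m - (i:ℕ))))
        = -∑ i : Fin (m+1), p.coeff (m - (i:ℕ)) := by rw [Finset.sum_neg_distrib]
    have e2 : ∑ i : Fin (m+1), p.coeff (m - (i:ℕ))
        = ∑ t ∈ Finset.range (m+1), p.coeff t := by
      rw [Fin.sum_univ_eq_sum_range (fun i => p.coeff (m - i)) (m+1)]
      exact Finset.sum_range_reflect (fun t => p.coeff t) (m+1)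
    rw [e1, e2]
    have := Finset.sum_range_succ (fun t => p.coeff t) (m+1)
    rw [this] at hc
    linarith
  rw [hγ, Polynomial.aeval_eq_sum_range' (p := p) (n := m+2) (by omega) Mp,
    Finset.sum_range_succ, ← hsum]
  simp only [neg_smul, Finset.sum_neg_distrib, sub_neg_eq_add]
  abel

lemma specConj (A U : Matrix (Fin n) (Fin n) ℝ) (d : Fin n → ℝ) (hU : IsUnit U)
    (hM : (1 : Matrix (Fin n) (Fin n) ℝ) - A = U * Matrix.diagonal d * U⁻¹) :
    spectrum ℝ ((1 : Matrix (Fin n) (Fin n) ℝ) - A) = Set.range d := by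
  obtain ⟨v, hv⟩ := hU
  have hinv : U⁻¹ = ((v⁻¹ : (Matrix (Fin n) (Fin n) ℝ)ˣ) : Matrix (Fin n) (Fin n) ℝ) := by
    rw [Matrix.coe_units_inv, hv]
  rw [hM, hinv, ← hv, spectrum.units_conjugate, _root_.spectrum_diagonal]

lemma le_sInf_mul {S : Set ℝ} (hS : S.Nonempty) {c a : ℝ} (ha : 0 ≤ a)
    (h : ∀ t ∈ S, c ≤ t * a) : c ≤ sInf S * a := by
  rcases eq_or_lt_of_le ha with h0 | h0
  · obtain ⟨t, ht⟩ := hS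
    have := h t ht
    rw [← h0] at this ⊢
    simpa using this
  · have hle : c / a ≤ sInf S :=
      le_csInf hS fun t ht => (div_le_iff₀ h0).mpr (h t ht)
    calc c = c / a * a := by field_simp
      _ ≤ sInf S * a := mul_le_mul_of_nonneg_right hle ha

lemma sSup_abs_spec (M : Matrix (Fin n) (Fin n) ℝ) (d : Fin n → ℝ)
    (hspec : spectrum ℝ M = Set.range d) (p : ℝ[X]) :
    0 ≤ sSup ((fun x => |p.eval x|) '' spectrum ℝ M) ∧
      ∀ i, |p.eval (d i)| ≤ sSup ((fun x => |p.eval x|) '' spectrum ℝ M) := by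
  have himg : (fun x => |p.eval x|) '' spectrum ℝ M
      = Set.range (fun i => |p.eval (d i)|) := by
    rw [hspec, ← Set.range_comp]; rfl
  have hbdd : BddAbove (Set.range (fun i : Fin n => |p.eval (d i)|)) :=
    (Set.finite_range _).bddAbove
  constructor
  · rcases isEmpty_or_nonempty (Fin n) with h | h
    · have he : Set.range (fun i : Fin n => |p.eval (d i)|) = ∅ := Set.range_eq_empty _
      rw [himg, he, Real.sSup_empty]
    · obtain ⟨i⟩ := h
      refine le_trans (abs_nonneg (p.eval (d i))) ?_
      rw [himg]; exact le_csSup hbdd ⟨i, rfl⟩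
  · intro i; rw [himg]; exact le_csSup hbdd ⟨i, rfl⟩

lemma vec_comb {m : ℕ} (P1 : Matrix (Fin n) (Fin n) ℝ)
    (P : Fin (m+1) → Matrix (Fin n) (Fin n) ℝ)
    (rs : EuclideanSpace ℝ (Fin n)) (γ : Fin (m+1) → ℝ) :
    mulVecE P1 rs + ∑ i : Fin (m+1), γ i • (mulVecE P1 rs - mulVecE (P i) rs)
      = mulVecE ((1 + ∑ i : Fin (m+1), γ i) • P1 - ∑ i : Fin (m+1), γ i • P i) rs := by
  rw [sub_mulVecE, smul_mulVecE, sum_mulVecE]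
  simp_rw [smul_mulVecE, smul_sub]
  rw [add_smul, one_smul, Finset.sum_sub_distrib, ← Finset.sum_smul]
  abel

lemma aeval_norm_bound (A U : Matrix (Fin n) (Fin n) ℝ) (d : Fin n → ℝ) (hU : IsUnit U)
    (hM : (1 : Matrix (Fin n) (Fin n) ℝ) - A = U * Matrix.diagonal d * U⁻¹)
    (p : ℝ[X]) (rs : EuclideanSpace ℝ (Fin n)) :
    ‖mulVecE (aeval ((1 : Matrix (Fin n) (Fin n) ℝ) - A) p) rs‖ ≤
      sSup ((fun x => |p.eval x|) '' spectrum ℝ ((1 : Matrix (Fin n) (Fin n) ℝ) - A)) *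
        (condNum U * ‖rs‖) := by
  have hdet := (Matrix.isUnit_iff_isUnit_det U).mp hU
  have hUU : U⁻¹ * U = 1 := Matrix.nonsing_inv_mul U hdet
  have hUU' : U * U⁻¹ = 1 := Matrix.mul_nonsing_inv U hdet
  obtain ⟨hC0, hCi⟩ := sSup_abs_spec ((1 : Matrix (Fin n) (Fin n) ℝ) - A) d
    (specConj A U d hU hM) p
  set C := sSup ((fun x => |p.eval x|) '' spectrum ℝ ((1 : Matrix (Fin n) (Fin n) ℝ) - A))
  rw [hM, aevalConj U d hUU hUU' p, mulVecE_mulVecE, mulVecE_mulVecE]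
  have hnU : (0:ℝ) ≤ opNorm U := norm_nonneg _
  calc ‖mulVecE U (mulVecE (diagonal fun i => p.eval (d i)) (mulVecE U⁻¹ rs))‖
      ≤ opNorm U * ‖mulVecE (diagonal fun i => p.eval (d i)) (mulVecE U⁻¹ rs)‖ :=
        norm_mulVecE_le _ _
    _ ≤ opNorm U * (C * ‖mulVecE U⁻¹ rs‖) :=
        mul_le_mul_of_nonneg_left (norm_diag_le _ C hC0 hCi _) hnU
    _ ≤ opNorm U * (C * (opNorm U⁻¹ * ‖rs‖)) := by
        refine mul_le_mul_of_nonneg_left (mul_le_mul_of_nonneg_left ?_ hC0) hnU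
        exact norm_mulVecE_le _ _
    _ = C * (condNum U * ‖rs‖) := by unfold condNum; ring

end Helpers

/-- aNGMRES(m, m+1), diagonalizable case:
`‖r_{j(m+1)}‖ ≤ (χ(m+1) κ₂(U))^j ‖r₀‖`. -/
theorem stmt_16 {n m : ℕ} (A U : Matrix (Fin n) (Fin n) ℝ) (d : Fin n → ℝ)
    (hA : IsUnit A) (hU : IsUnit U)
    (hM : (1 : Matrix (Fin n) (Fin n) ℝ) - A = U * Matrix.diagonal d * U⁻¹)
    (b : EuclideanSpace ℝ (Fin n)) (u : ℕ → EuclideanSpace ℝ (Fin n))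
    (hu : aNGMRES A b (m : ℕ∞) (m+1) u) :
    ∀ j : ℕ, 1 ≤ j →
      ‖res A b (u (j * (m+1)))‖ ≤
        (chiSp ((1 : Matrix (Fin n) (Fin n) ℝ) - A) (m+1) * condNum U) ^ j *
          ‖res A b (u 0)‖ := by
  have hspec : spectrum ℝ ((1 : Matrix (Fin n) (Fin n) ℝ) - A) = Set.range d :=
    specConj A U d hU hM
  set C : ℝ := chiSp ((1 : Matrix (Fin n) (Fin n) ℝ) - A) (m+1) * condNum U with hCdef
  have hSne : Set.Nonempty {t : ℝ | ∃ p : Polynomial ℝ, p.natDegree ≤ m+1 ∧ p.eval 1 = 1 ∧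
      t = sSup ((fun x => |p.eval x|) ''
        spectrum ℝ ((1 : Matrix (Fin n) (Fin n) ℝ) - A))} := by
    exact ⟨_, 1, by simp, by simp, rfl⟩
  have hC0 : 0 ≤ C := by
    have h1 : 0 ≤ chiSp ((1 : Matrix (Fin n) (Fin n) ℝ) - A) (m+1) := by
      unfold chiSp
      refine le_csInf hSne ?_
      rintro t ⟨p, -, -, rfl⟩
      exact (sSup_abs_spec _ d hspec p).1
    have h2 : (0:ℝ) ≤ condNum U :=
      mul_nonneg (norm_nonneg _) (norm_nonneg _)
    exact mul_nonneg h1 h2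
  have block : ∀ j : ℕ, ‖res A b (u ((j+1)*(m+1)))‖ ≤ C * ‖res A b (u (j*(m+1)))‖ := by
    intro j
    set s := j*(m+1) with hs
    set k := (j+1)*(m+1) with hk
    have hks : k = s + (m+1) := by rw [hk, hs]; ring
    have hres : ∀ t, t ≤ m → res A b (u (s+t))
        = mulVecE (((1 : Matrix (Fin n) (Fin n) ℝ) - A)^t) (res A b (u s)) := by
      intro t
      induction t with
      | zero => intro _; rw [pow_zero, mulVecE_one, Nat.add_zero]
      | succ t ih =>
          intro ht
          have hdvds : (m+1) ∣ s := ⟨j, by rw [hs]; ring⟩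
          have h1 : u (s+(t+1)) = fp A b (u (s+t)) := by
            have h2 := (hu (s+(t+1)) (by omega)).1
            have h3 : s + (t+1) - 1 = s + t := by omega
            rw [h3] at h2
            apply h2
            intro hdvd
            have h4 : (m+1) ∣ (t+1) := by
              have := Nat.dvd_sub hdvd hdvds
              simpa using this
            have := Nat.le_of_dvd (by omega) h4
            omega
          rw [h1, res_fp, ih (by omega), ← mulVecE_mulVecE, ← pow_succ']
    have hk1 : 1 ≤ k := by omega
    have hdvd : (m+1) ∣ k := ⟨j+1, by rw [hk]; ring⟩
    have hstep := (hu k hk1).2 hdvd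
    have hm' : ((min (m : ℕ∞) ((k : ℕ∞) - 1)).toNat) = m := by
      have h1 : ((k:ℕ∞) - 1) = ((k-1 : ℕ) : ℕ∞) := by
        rw [ENat.coe_sub, Nat.cast_one]
      have h2 : (m : ℕ∞) ≤ ((k-1:ℕ) : ℕ∞) := by
        exact_mod_cast (by omega : m ≤ k-1)
      rw [h1, min_eq_left h2, ENat.toNat_coe]
    rw [hm'] at hstep
    obtain ⟨β, hmin, hnext⟩ := hstep
    have hk1s : k - 1 = s + m := by omega
    have hrk : res A b (u k) = res A b (fp A b (u (k-1))) +
        ∑ i : Fin (m+1), β i • (res A b (fp A b (u (k-1))) - res A b (u ((k-1) - (i:ℕ)))) := by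
      rw [hnext, res_add, mulVecE_sum]
      congr 1
      refine Finset.sum_congr rfl fun i _ => ?_
      rw [mulVecE_smul, mulVecE_res_sub A b]
    have hub : ∀ γ : Fin (m+1) → ℝ, ‖res A b (u k)‖ ≤ ngObj A b m u (k-1) γ := by
      intro γ
      have heq : ‖res A b (u k)‖ = ngObj A b m u (k-1) β := by
        rw [hrk]; rfl
      rw [heq]; exact hmin γ
    have hfp : res A b (fp A b (u (k-1)))
        = mulVecE (((1 : Matrix (Fin n) (Fin n) ℝ) - A)^(m+1)) (res A b (u s)) := by
      rw [res_fp, hk1s, hres m le_rfl, ← mulVecE_mulVecE, ← pow_succ']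
    have hprev : ∀ i : Fin (m+1), res A b (u ((k-1) - (i:ℕ)))
        = mulVecE (((1 : Matrix (Fin n) (Fin n) ℝ) - A)^(m - (i:ℕ))) (res A b (u s)) := by
      intro i
      have hi : (i:ℕ) < m+1 := i.isLt
      have h1 : (k-1) - (i:ℕ) = s + (m - (i:ℕ)) := by omega
      rw [h1, hres (m - (i:ℕ)) (by omega)]
    have hkey : ∀ t ∈ {t : ℝ | ∃ p : Polynomial ℝ, p.natDegree ≤ m+1 ∧ p.eval 1 = 1 ∧
        t = sSup ((fun x => |p.eval x|) ''
          spectrum ℝ ((1 : Matrix (Fin n) (Fin n) ℝ) - A))},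
        ‖res A b (u k)‖ ≤ t * (condNum U * ‖res A b (u s)‖) := by
      rintro t ⟨p, hdeg, h1, rfl⟩
      set γ : Fin (m+1) → ℝ := fun i => -(p.coeff (m - (i:ℕ))) with hγdef
      have h2 := hub γ
      have h3 : ngObj A b m u (k-1) γ
          = ‖mulVecE (aeval ((1 : Matrix (Fin n) (Fin n) ℝ) - A) p) (res A b (u s))‖ := by
        unfold ngObj
        rw [hfp]
        simp_rw [hprev]
        rw [vec_comb]
        simp only [hγdef]
        rw [Q_eq ((1 : Matrix (Fin n) (Fin n) ℝ) - A) p hdeg h1]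
      rw [h3] at h2
      exact h2.trans (aeval_norm_bound A U d hU hM p _)
    have ha : 0 ≤ condNum U * ‖res A b (u s)‖ :=
      mul_nonneg (mul_nonneg (norm_nonneg _) (norm_nonneg _)) (norm_nonneg _)
    have hfin := le_sInf_mul hSne ha hkey
    have hchi : chiSp ((1 : Matrix (Fin n) (Fin n) ℝ) - A) (m+1)
        = sInf {t : ℝ | ∃ p : Polynomial ℝ, p.natDegree ≤ m+1 ∧ p.eval 1 = 1 ∧
          t = sSup ((fun x => |p.eval x|) ''
            spectrum ℝ ((1 : Matrix (Fin n) (Fin n) ℝ) - A))} := rfl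
    calc ‖res A b (u k)‖
        ≤ sInf {t : ℝ | ∃ p : Polynomial ℝ, p.natDegree ≤ m+1 ∧ p.eval 1 = 1 ∧
            t = sSup ((fun x => |p.eval x|) ''
              spectrum ℝ ((1 : Matrix (Fin n) (Fin n) ℝ) - A))} *
            (condNum U * ‖res A b (u s)‖) := hfin
      _ = C * ‖res A b (u s)‖ := by rw [hCdef, hchi]; ring
  have main : ∀ j : ℕ, ‖res A b (u (j*(m+1)))‖ ≤ C^j * ‖res A b (u 0)‖ := by
    intro j
    induction j with
    | zero => simp
    | succ j ih =>
        calc ‖res A b (u ((j+1)*(m+1)))‖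
            ≤ C * ‖res A b (u (j*(m+1)))‖ := block j
          _ ≤ C * (C^j * ‖res A b (u 0)‖) := mul_le_mul_of_nonneg_left ih hC0
          _ = C^(j+1) * ‖res A b (u 0)‖ := by ring
  intro j _
  exact main j


end
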